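/- Let n be a nonzero integer and let A ∈ M₂(ℤ) be the matrix whose (i,j) entry equals n (for some fixed position (i,j)) and whose other three entries are zero. Then A has (left) idempotent stable range one if and only if n = 1 or n = −1. -/

import Mathlib

/-- Left idempotent stable range one. -/
def HasLeftIdemSR1 {S : Type*} [Ring S] (a : S) : Prop :=
  ∀ x : S, ∃ e : S, IsIdempotentElem e ∧ IsUnit (a + e * (x * a - 1))

open Matrix in
private lemma isr1_fwd (n : ℤ) (hn : n ≠ 0) (i j : Fin 2)
    (h : HasLeftIdemSR1 (single i j n)) : n = 1 ∨ n = -1 := by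
  set c : ℤ := if i = j then 1 else 2 with hc
  obtain ⟨e, he, hu⟩ := h (single j i c)
  set M := single i j n + e * (single j i c * single i j n - 1) with hM
  have hdetM : M.det = 1 ∨ M.det = -1 := by
    rw [← Int.isUnit_iff]
    exact (Matrix.isUnit_iff_isUnit_det M).mp hu
  have hde : e.det = 0 ∨ e.det = 1 := by
    have := congrArg Matrix.det he
    rw [Matrix.det_mul] at this
    have h2 : e.det * (e.det - 1) = 0 := by ring_nf; linarith [this]
    rcases mul_eq_zero.mp h2 with h | h
    · exact Or.inl h
    · right; linarith
  rcases hde with hde | hde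
  · set φ := Int.castRingHom (ZMod n.natAbs) with hφ
    have hn0 : φ n = 0 := by
      simp only [hφ, Int.coe_castRingHom]
      rw [ZMod.intCast_zmod_eq_zero_iff_dvd]
      exact Int.natAbs_dvd.mpr dvd_rfl
    have hA : ∀ k l : Fin 2, φ.mapMatrix (single k l n) = 0 := by
      intro k l
      ext a b
      simp only [RingHom.mapMatrix_apply, Matrix.map_apply, Matrix.single,
        Matrix.of_apply, Matrix.zero_apply]
      split_ifs <;> simp [hn0]
    have hMd : φ M.det = 0 := by
      rw [RingHom.map_det]
      have : φ.mapMatrix M = -(φ.mapMatrix e) := by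
        rw [hM]
        simp only [map_add, _root_.map_mul, map_sub, _root_.map_one, hA]
        noncomm_ring
      rw [this, Matrix.det_neg, ← RingHom.map_det, hde]
      simp
    have hdvd : (n.natAbs : ℤ) ∣ M.det := by
      rw [← ZMod.intCast_zmod_eq_zero_iff_dvd]
      exact hMd
    rcases hdetM with h1 | h1 <;> rw [h1] at hdvd <;>
      [skip; rw [dvd_neg] at hdvd] <;>
    · have := Int.eq_one_of_dvd_one (by positivity) hdvd
      omega
  · have heu : IsUnit e := (Matrix.isUnit_iff_isUnit_det e).mpr (by rw [hde]; exact isUnit_one)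
    have he1 : e = 1 := by
      obtain ⟨u, rfl⟩ := heu
      have h1 : u * u = u := Units.ext he
      have h2 : u = 1 := by
        have := mul_right_cancel (a := u) (b := u) (c := 1) (by simpa using h1)
        exact this
      rw [h2, Units.val_one]
    subst he1
    rw [hM] at hdetM
    have key : (single i j n + 1 * (single j i c * single i j n - 1)).det
        = 1 - 2 * n := by
      fin_cases i <;> fin_cases j <;>
        simp [hc, Matrix.det_fin_two, Matrix.add_apply, Matrix.sub_apply, Matrix.mul_apply,
          Fin.sum_univ_two, Matrix.single, Matrix.one_apply] <;> ring
    rw [key] at hdetM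
    left
    omega

open Matrix in
private lemma isr1_bwd (ε : ℤ) (hε : ε = 1 ∨ ε = -1) (i j : Fin 2) :
    HasLeftIdemSR1 (single i j ε) := by
  intro x
  have hε2 : ε * ε = 1 := by rcases hε with rfl | rfl <;> norm_num
  fin_cases i <;> fin_cases j
  · refine ⟨single 1 1 1, ?_, ?_⟩
    · show _ * _ = _
      simp
    · rw [Matrix.isUnit_iff_isUnit_det, Int.isUnit_iff]
      rcases hε with rfl | rfl
      · right
        simp [Matrix.det_fin_two, Matrix.add_apply, Matrix.sub_apply, Matrix.mul_apply,
          Fin.sum_univ_two, Matrix.single, Matrix.one_apply]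
      · left
        simp [Matrix.det_fin_two, Matrix.add_apply, Matrix.sub_apply, Matrix.mul_apply,
          Fin.sum_univ_two, Matrix.single, Matrix.one_apply]
  · refine ⟨single 1 1 1 + single 1 0 ε, ?_, ?_⟩
    · show _ * _ = _
      simp [mul_add, add_mul, Matrix.single_mul_single_same, Matrix.single_mul_single_of_ne]
    · rw [Matrix.isUnit_iff_isUnit_det, Int.isUnit_iff]
      left
      simp [Matrix.det_fin_two, Matrix.add_apply, Matrix.sub_apply, Matrix.mul_apply,
        Fin.sum_univ_two, Matrix.single, Matrix.one_apply]
      ring_nf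
      linear_combination hε2
  · refine ⟨single 0 0 1 + single 0 1 ε, ?_, ?_⟩
    · show _ * _ = _
      simp [mul_add, add_mul, Matrix.single_mul_single_same, Matrix.single_mul_single_of_ne]
    · rw [Matrix.isUnit_iff_isUnit_det, Int.isUnit_iff]
      left
      simp [Matrix.det_fin_two, Matrix.add_apply, Matrix.sub_apply, Matrix.mul_apply,
        Fin.sum_univ_two, Matrix.single, Matrix.one_apply]
      ring_nf
      linear_combination hε2
  · refine ⟨single 0 0 1, ?_, ?_⟩
    · show _ * _ = _
      simp
    · rw [Matrix.isUnit_iff_isUnit_det, Int.isUnit_iff]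
      rcases hε with rfl | rfl
      · right
        simp [Matrix.det_fin_two, Matrix.add_apply, Matrix.sub_apply, Matrix.mul_apply,
          Fin.sum_univ_two, Matrix.single, Matrix.one_apply]
      · left
        simp [Matrix.det_fin_two, Matrix.add_apply, Matrix.sub_apply, Matrix.mul_apply,
          Fin.sum_univ_two, Matrix.single, Matrix.one_apply]

theorem isr1_three_zero_entries (n : ℤ) (hn : n ≠ 0) (i j : Fin 2) :
    HasLeftIdemSR1 (Matrix.single i j n) ↔ n = 1 ∨ n = -1 := by
  constructor
  · exact isr1_fwd n hn i j
  · exact fun h => isr1_bwd n h i j
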